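/- For every real x ≥ 1, the function h(x) = 1 - (3 + 1/x)·(x/(x+1))^{x+1} satisfies h(x) ≤ 0, with equality at x = 1. -/

import Mathlib

noncomputable def h (x : ℝ) : ℝ := 1 - (3 + 1/x) * (x/(x+1)) ^ (x+1)

open Real Set

noncomputable def F (x : ℝ) : ℝ :=
  Real.log (3 + 1/x) + (x+1) * (Real.log x - Real.log (x+1))

lemma key_log {x : ℝ} (hx : 1 ≤ x) : Real.log (x+1) - Real.log x ≤ 3/(3*x+1) := by
  have hx0 : (0:ℝ) < x := by linarith
  have hx1 : (0:ℝ) < 3*x+1 := by linarith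
  rw [← Real.log_div (by linarith) (ne_of_gt hx0),
      Real.log_le_iff_le_exp (by positivity)]
  have ht : (0:ℝ) ≤ 3/(3*x+1) := by positivity
  refine le_trans ?_ (Real.quadratic_le_exp_of_nonneg ht)
  rw [div_le_iff₀ hx0]
  have h2 : (3/(3*x+1))^2 = 9 / (3*x+1)^2 := by rw [div_pow]; norm_num
  rw [h2]
  have e0 : (1 + 3/(3*x+1) + 9/(3*x+1)^2/2) * x
      = x + (3*x)/(3*x+1) + (9*x) / (2*(3*x+1)^2) := by field_simp
  rw [e0]
  have e1 : (3*x)/(3*x+1) + (9*x) / (2*(3*x+1)^2) - 1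
      = (3*x - 2) / (2*(3*x+1)^2) := by field_simp; ring
  have e2 : 0 ≤ (3*x - 2) / (2*(3*x+1)^2) :=
    div_nonneg (by linarith) (by positivity)
  linarith [e1 ▸ e2]

lemma hasDerivF {x : ℝ} (hx : 0 < x) :
    HasDerivAt F ((-(x^2)⁻¹)/(3+1/x) + (1*(Real.log x - Real.log (x+1))
      + (x+1)*(x⁻¹ - (x+1)⁻¹))) x := by
  have hx1 : (0:ℝ) < x + 1 := by linarith
  have h3 : (3 + 1/x) ≠ 0 := by positivity
  have d1 : HasDerivAt (fun y : ℝ => 3 + 1/y) (-(x^2)⁻¹) x := by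
    simpa [one_div] using ((hasDerivAt_inv (ne_of_gt hx)).const_add 3)
  have d2 : HasDerivAt (fun y : ℝ => Real.log (3 + 1/y)) ((-(x^2)⁻¹)/(3+1/x)) x :=
    d1.log h3
  have d3 : HasDerivAt (fun y : ℝ => y + 1) 1 x := (hasDerivAt_id x).add_const 1
  have d4 : HasDerivAt (fun y : ℝ => Real.log y - Real.log (y+1)) (x⁻¹ - (x+1)⁻¹) x := by
    have := (Real.hasDerivAt_log (ne_of_gt hx)).sub
      ((d3.log (ne_of_gt hx1)))
    rw [one_div] at this; exact this
  exact d2.add (d3.mul d4)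

lemma derivF_nonneg {x : ℝ} (hx : 1 ≤ x) :
    0 ≤ ((-(x^2)⁻¹)/(3+1/x) + (1*(Real.log x - Real.log (x+1))
      + (x+1)*(x⁻¹ - (x+1)⁻¹))) := by
  have hx0 : (0:ℝ) < x := by linarith
  have hx1 : (0:ℝ) < x + 1 := by linarith
  have hx2 : (0:ℝ) < 3*x+1 := by linarith
  have e1 : (-(x^2)⁻¹)/(3+1/x) + (x+1)*(x⁻¹ - (x+1)⁻¹) = 3/(3*x+1) := by
    field_simp; ring
  have := key_log hx
  linarith

lemma F_nonneg {x : ℝ} (hx : 1 ≤ x) : 0 ≤ F x := by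
  have hmono : MonotoneOn F (Ici 1) := by
    apply monotoneOn_of_deriv_nonneg (convex_Ici 1)
    · intro y hy
      exact (hasDerivF (by simp at hy; linarith)).differentiableAt.continuousAt.continuousWithinAt
    · intro y hy
      rw [interior_Ici] at hy
      exact (hasDerivF (by simp at hy; linarith)).differentiableAt.differentiableWithinAt
    · intro y hy
      rw [interior_Ici] at hy
      simp only [mem_Ioi] at hy
      rw [(hasDerivF (by linarith : (0:ℝ) < y)).deriv]
      exact derivF_nonneg hy.le
  have hF1 : F 1 = 0 := by
    have h4 : Real.log (4:ℝ) = 2 * Real.log 2 := by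
      rw [show (4:ℝ) = 2^2 by norm_num, Real.log_pow]
      push_cast; ring
    show Real.log (3 + 1/(1:ℝ)) + ((1:ℝ)+1) * (Real.log 1 - Real.log (1+1)) = 0
    norm_num [Real.log_one]
    linarith [h4]
  calc (0:ℝ) = F 1 := hF1.symm
    _ ≤ F x := hmono (by simp) (by simpa using hx) hx

theorem stmt0 : (∀ x : ℝ, 1 ≤ x → h x ≤ 0) ∧ h 1 = 0 := by
  have main : ∀ x : ℝ, 1 ≤ x → 1 ≤ (3 + 1/x) * (x/(x+1)) ^ (x+1) := by
    intro x hx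
    have hx0 : (0:ℝ) < x := by linarith
    have hx1 : (0:ℝ) < x + 1 := by linarith
    have hb : (0:ℝ) < x/(x+1) := by positivity
    have h3 : (0:ℝ) < 3 + 1/x := by positivity
    rw [Real.rpow_def_of_pos hb, Real.log_div (ne_of_gt hx0) (ne_of_gt hx1)]
    calc (1:ℝ) = Real.exp 0 := (Real.exp_zero).symm
      _ ≤ Real.exp (F x) := Real.exp_le_exp.mpr (F_nonneg hx)
      _ = (3 + 1/x) * Real.exp ((Real.log x - Real.log (x+1)) * (x+1)) := by
          rw [F, Real.exp_add, Real.exp_log h3, mul_comm (x+1)]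
  refine ⟨fun x hx => ?_, ?_⟩
  · have := main x hx
    simp only [h]
    linarith
  · have h1 : ((1:ℝ)/(1+1)) ^ ((1:ℝ)+1) = 1/4 := by
      rw [show ((1:ℝ)+1) = ((2:ℕ):ℝ) by norm_num, Real.rpow_natCast]
      norm_num
    simp only [h]
    rw [h1]
    norm_num
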